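/- Let a, c, ε₁, ε₂ be real numbers, let L ≥ 3 and t ≥ 1 be integers, and set λ_eff = (1/4)·(|a| + |c| + √((|a| − |c|)² + 4|ε₁||ε₂|))². Then |trace(M_L(A,B,C)^t)| ≤ 2L·λ_eff^t. -/

import Mathlib

open Matrix

/-- The matrix `A = [[ε₁ε₂, cε₂], [aε₁, ε₁ε₂]]` regarded as a complex matrix. -/
noncomputable def Amat (a c e1 e2 : ℝ) : Matrix (Fin 2) (Fin 2) ℂ :=
  !![((e1 * e2 : ℝ) : ℂ), ((c * e2 : ℝ) : ℂ); ((a * e1 : ℝ) : ℂ), ((e1 * e2 : ℝ) : ℂ)]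

/-- The matrix `B = [[c², 0], [cε₁, 0]]` regarded as a complex matrix. -/
noncomputable def Bmat (a c e1 e2 : ℝ) : Matrix (Fin 2) (Fin 2) ℂ :=
  !![((c ^ 2 : ℝ) : ℂ), 0; ((c * e1 : ℝ) : ℂ), 0]

/-- The matrix `C = [[0, aε₂], [0, a²]]` regarded as a complex matrix. -/
noncomputable def Cmat (a c e1 e2 : ℝ) : Matrix (Fin 2) (Fin 2) ℂ :=
  !![0, ((a * e2 : ℝ) : ℂ); 0, ((a ^ 2 : ℝ) : ℂ)]

/-- The block-circulant matrix `M_L(A,B,C)`: block `(i,j)` equals `A` if `j = i`,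
`B` if `j = i + 1`, `C` if `j = i − 1` and `0` otherwise. -/
noncomputable def blockCirc (L n : ℕ) (A B C : Matrix (Fin n) (Fin n) ℂ) :
    Matrix (ZMod L × Fin n) (ZMod L × Fin n) ℂ :=
  fun p q =>
    if q.1 = p.1 then A p.2 q.2
    else if q.1 = p.1 + 1 then B p.2 q.2
    else if q.1 = p.1 - 1 then C p.2 q.2
    else 0

lemma key9 (a c e1 e2 : ℝ) (L : ℕ) [NeZero L] (hL : 3 ≤ L) (x y lam : ℝ)
    (hx : 0 < x) (hy : 0 < y) (hlam : 0 ≤ lam)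
    (hrow0 : (|e1 * e2| + c ^ 2) * x + (|c * e2| + |a * e2|) * y ≤ lam * x)
    (hrow1 : (|a * e1| + |c * e1|) * x + (|e1 * e2| + a ^ 2) * y ≤ lam * y)
    (t : ℕ) :
    ‖(Matrix.trace (blockCirc L 2 (Amat a c e1 e2) (Bmat a c e1 e2) (Cmat a c e1 e2) ^ t))‖ ≤
      2 * L * lam ^ t := by
  haveI : Fact (1 < L) := ⟨by omega⟩
  set M := blockCirc L 2 (Amat a c e1 e2) (Bmat a c e1 e2) (Cmat a c e1 e2) with hM
  set V : ZMod L × Fin 2 → ℝ := fun p => if p.2 = 0 then x else y with hV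
  have hVpos : ∀ p, 0 < V p := by
    intro p; simp only [hV]; split <;> assumption
  -- distinctness in ZMod L
  have h1 : ∀ i : ZMod L, i + 1 ≠ i := by
    intro i h
    have : (1 : ZMod L) = 0 := by linear_combination h
    exact one_ne_zero this
  have h2 : ∀ i : ZMod L, i - 1 ≠ i := by
    intro i h
    have : (1 : ZMod L) = 0 := by linear_combination -h
    exact one_ne_zero this
  have h3 : ∀ i : ZMod L, i + 1 ≠ i - 1 := by
    intro i h
    have h2' : ((2 : ℕ) : ZMod L) = 0 := by push_cast; linear_combination h
    rw [ZMod.natCast_eq_zero_iff] at h2'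
    exact absurd (Nat.le_of_dvd (by norm_num) h2') (by omega)
  -- row bound
  have hstep : ∀ p, (∑ q, ‖M p q‖ * V q) ≤ lam * V p := by
    rintro ⟨i, si⟩
    rw [Fintype.sum_prod_type]
    have hsplit : ∀ g : ZMod L → ℝ, (∀ j, j ≠ i → j ≠ i + 1 → j ≠ i - 1 → g j = 0) →
        (∑ j, g j) = g i + g (i + 1) + g (i - 1) := by
      intro g hg
      have hsub : ({i, i + 1, i - 1} : Finset (ZMod L)) ⊆ Finset.univ := Finset.subset_univ _
      rw [← Finset.sum_subset hsub (fun j _ hj => by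
        simp only [Finset.mem_insert, Finset.mem_singleton, not_or] at hj
        exact hg j hj.1 hj.2.1 hj.2.2)]
      rw [Finset.sum_insert (by simp [Ne.symm (h1 i), Ne.symm (h2 i)]),
        Finset.sum_pair (h3 i)]
      ring
    rw [hsplit _ (by
      intro j hj1 hj2 hj3
      apply Finset.sum_eq_zero
      intro s _
      simp [hM, blockCirc, hj1, hj2, hj3])]
    have eA : ∀ s, M (i, si) (i, s) = Amat a c e1 e2 si s := by
      intro s; simp [hM, blockCirc]
    have eB : ∀ s, M (i, si) (i + 1, s) = Bmat a c e1 e2 si s := by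
      intro s; simp [hM, blockCirc, h1 i]
    have eC : ∀ s, M (i, si) (i - 1, s) = Cmat a c e1 e2 si s := by
      intro s; simp [hM, blockCirc, h2 i, Ne.symm (h3 i)]
    simp only [Fin.sum_univ_two, eA, eB, eC]
    have hx0 : ∀ j : ZMod L, V (j, (0 : Fin 2)) = x := by intro j; simp [hV]
    have hy1 : ∀ j : ZMod L, V (j, (1 : Fin 2)) = y := by intro j; simp [hV]
    fin_cases si
    · simp only [Fin.zero_eta, Fin.isValue, hx0, hy1, Amat, Bmat, Cmat, Matrix.cons_val',
        Matrix.cons_val_zero, Matrix.cons_val_one, Matrix.head_cons, Matrix.empty_val',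
        Matrix.cons_val_fin_one, Matrix.head_fin_const, Matrix.of_apply, Complex.norm_real, Real.norm_eq_abs,
        map_zero, norm_zero]
      nlinarith [hrow0, abs_of_nonneg (sq_nonneg c)]
    · simp only [Fin.mk_one, Fin.isValue, hx0, hy1, Amat, Bmat, Cmat, Matrix.cons_val',
        Matrix.cons_val_zero, Matrix.cons_val_one, Matrix.head_cons, Matrix.empty_val',
        Matrix.cons_val_fin_one, Matrix.head_fin_const, Matrix.of_apply, Complex.norm_real, Real.norm_eq_abs,
        map_zero, norm_zero]
      nlinarith [hrow1, abs_of_nonneg (sq_nonneg a)]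
  -- induction
  have hind : ∀ n : ℕ, ∀ p, (∑ q, ‖(M ^ n) p q‖ * V q) ≤ lam ^ n * V p := by
    intro n
    induction n with
    | zero =>
      intro p
      simp only [pow_zero, Matrix.one_apply, one_mul]
      have : (∑ q, ‖(if p = q then (1 : ℂ) else 0)‖ * V q)
          = ∑ q, (if p = q then V q else 0) := by
        apply Finset.sum_congr rfl
        intro q _
        split <;> simp
      rw [this, Finset.sum_ite_eq]
      simp
    | succ n ih =>
      intro p
      rw [pow_succ']
      calc (∑ q, ‖(M * M ^ n) p q‖ * V q)
          ≤ ∑ q, (∑ r, ‖M p r‖ * ‖(M ^ n) r q‖) * V q := by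
            apply Finset.sum_le_sum
            intro q _
            apply mul_le_mul_of_nonneg_right _ (hVpos q).le
            rw [Matrix.mul_apply]
            refine le_trans (norm_sum_le _ _) ?_
            apply Finset.sum_le_sum
            intro r _
            exact le_of_eq (norm_mul _ _)
        _ = ∑ r, ‖M p r‖ * (∑ q, ‖(M ^ n) r q‖ * V q) := by
            simp_rw [Finset.sum_mul, Finset.mul_sum, mul_assoc]
            rw [Finset.sum_comm]
        _ ≤ ∑ r, ‖M p r‖ * (lam ^ n * V r) := by
            apply Finset.sum_le_sum
            intro r _
            exact mul_le_mul_of_nonneg_left (ih r) (norm_nonneg _)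
        _ = lam ^ n * ∑ r, ‖M p r‖ * V r := by
            rw [Finset.mul_sum]; apply Finset.sum_congr rfl; intros; ring
        _ ≤ lam ^ n * (lam * V p) :=
            mul_le_mul_of_nonneg_left (hstep p) (pow_nonneg hlam n)
        _ = lam ^ (n + 1) * V p := by ring
  -- diagonal bound
  have hdiag : ∀ p, ‖(M ^ t) p p‖ ≤ lam ^ t := by
    intro p
    have hs : ‖(M ^ t) p p‖ * V p ≤ ∑ q, ‖(M ^ t) p q‖ * V q :=
      Finset.single_le_sum (f := fun q => ‖(M ^ t) p q‖ * V q)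
        (fun q _ => mul_nonneg (norm_nonneg _) (hVpos q).le) (Finset.mem_univ p)
    have := le_trans hs (hind t p)
    exact le_of_mul_le_mul_right this (hVpos p)
  -- trace bound
  rw [Matrix.trace]
  refine le_trans (norm_sum_le _ _) ?_
  have : (∑ p : ZMod L × Fin 2, ‖Matrix.diag (M ^ t) p‖)
      ≤ ∑ _p : ZMod L × Fin 2, lam ^ t := by
    apply Finset.sum_le_sum
    intro p _
    exact hdiag p
  refine le_trans this ?_
  rw [Finset.sum_const, Finset.card_univ, Fintype.card_prod, ZMod.card, Fintype.card_fin,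
    nsmul_eq_mul]
  push_cast
  nlinarith [pow_nonneg hlam t, (Nat.cast_le (α := ℝ)).2 hL]

lemma rows9 (a c e1 e2 : ℝ) (ep : ℝ) (hep : 0 < ep) :
    ∃ x y : ℝ, 0 < x ∧ 0 < y ∧
      (|e1 * e2| + c ^ 2) * x + (|c * e2| + |a * e2|) * y ≤
        ((1/4) * (|a| + |c| + Real.sqrt ((|a| - |c|) ^ 2 + 4 * (|e1| + ep) * (|e2| + ep))) ^ 2) * x ∧
      (|a * e1| + |c * e1|) * x + (|e1 * e2| + a ^ 2) * y ≤
        ((1/4) * (|a| + |c| + Real.sqrt ((|a| - |c|) ^ 2 + 4 * (|e1| + ep) * (|e2| + ep))) ^ 2) * y := by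
  set s := Real.sqrt ((|a| - |c|) ^ 2 + 4 * (|e1| + ep) * (|e2| + ep)) with hsdef
  have hD : (0:ℝ) ≤ (|a| - |c|) ^ 2 + 4 * (|e1| + ep) * (|e2| + ep) := by positivity
  have hs2 : s ^ 2 = (|a| - |c|) ^ 2 + 4 * (|e1| + ep) * (|e2| + ep) := Real.sq_sqrt hD
  have hs0 : 0 ≤ s := Real.sqrt_nonneg _
  have he1 : 0 < |e1| + ep := by positivity
  have he2 : 0 < |e2| + ep := by positivity
  obtain ⟨μ, hmu⟩ : ∃ μ : ℝ, μ = (|a| + |c| + s) / 2 := ⟨_, rfl⟩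
  have hmusq : (1/4) * (|a| + |c| + s) ^ 2 = μ ^ 2 := by rw [hmu]; ring
  rw [hmusq]
  have hy : 0 < μ - |c| := by
    have : s > |c| - |a| := by nlinarith [mul_pos he1 he2]
    rw [hmu]; linarith
  have hprod : (μ - |a|) * (μ - |c|) = (|e1| + ep) * (|e2| + ep) := by
    rw [hmu]; linear_combination hs2 / 4
  have hc2 : |c| * |c| = c ^ 2 := by rw [abs_mul_abs_self]; ring
  have ha2 : |a| * |a| = a ^ 2 := by rw [abs_mul_abs_self]; ring
  have h1 : |e1 * e2| ≤ (|e1| + ep) * (|e2| + ep) := by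
    rw [abs_mul]; nlinarith [abs_nonneg e1, abs_nonneg e2]
  have h2 : |c * e2| ≤ |c| * (|e2| + ep) := by
    rw [abs_mul]; nlinarith [abs_nonneg c]
  have h3 : |a * e2| ≤ |a| * (|e2| + ep) := by
    rw [abs_mul]; nlinarith [abs_nonneg a]
  have h4 : |c * e1| ≤ |c| * (|e1| + ep) := by
    rw [abs_mul]; nlinarith [abs_nonneg c]
  have h5 : |a * e1| ≤ |a| * (|e1| + ep) := by
    rw [abs_mul]; nlinarith [abs_nonneg a]
  refine ⟨|e2| + ep, μ - |c|, he2, hy, ?_, ?_⟩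
  · have hq0 : μ ^ 2 * (|e2| + ep)
        = (c ^ 2 + (|e1| + ep) * (|e2| + ep)) * (|e2| + ep)
          + (|c| + |a|) * (|e2| + ep) * (μ - |c|) := by
      linear_combination (|e2| + ep) * hprod + (|e2| + ep) * hc2
    have k1 := mul_le_mul_of_nonneg_right h1 he2.le
    have k2 := mul_le_mul_of_nonneg_right h2 hy.le
    have k3 := mul_le_mul_of_nonneg_right h3 hy.le
    linarith [hq0, k1, k2, k3]
  · have hq1 : μ ^ 2 * (μ - |c|)
        = (|a| + |c|) * ((|e1| + ep) * (|e2| + ep))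
          + ((|e1| + ep) * (|e2| + ep) + a ^ 2) * (μ - |c|) := by
      linear_combination (μ + |a|) * hprod + (μ - |c|) * ha2
    have k1 := mul_le_mul_of_nonneg_right h1 hy.le
    have k4 := mul_le_mul_of_nonneg_right h4 he2.le
    have k5 := mul_le_mul_of_nonneg_right h5 he2.le
    linarith [hq1, k1, k4, k5]


/-- `|trace(M_L(A,B,C)^t)| ≤ 2L·λ_eff^t` with
`λ_eff = (|a| + |c| + √((|a|−|c|)² + 4|ε₁||ε₂|))²/4`. -/
theorem stmt9 (a c e1 e2 : ℝ) (L t : ℕ) [NeZero L] (hL : 3 ≤ L) (ht : 1 ≤ t) :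
    ‖(Matrix.trace (blockCirc L 2 (Amat a c e1 e2) (Bmat a c e1 e2) (Cmat a c e1 e2) ^ t))‖ ≤
      2 * L * ((1 / 4) * (|a| + |c| + Real.sqrt ((|a| - |c|) ^ 2 + 4 * |e1| * |e2|)) ^ 2) ^ t := by
  have hbound : ∀ ep : ℝ, 0 < ep →
      ‖(Matrix.trace (blockCirc L 2 (Amat a c e1 e2) (Bmat a c e1 e2) (Cmat a c e1 e2) ^ t))‖ ≤
        2 * L * ((1 / 4) *
          (|a| + |c| + Real.sqrt ((|a| - |c|) ^ 2 + 4 * (|e1| + ep) * (|e2| + ep))) ^ 2) ^ t := by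
    intro ep hep
    obtain ⟨x, y, hx, hy, hrow0, hrow1⟩ := rows9 a c e1 e2 ep hep
    exact key9 a c e1 e2 L hL x y _ hx hy (by positivity) hrow0 hrow1 t
  have hc : Continuous (fun ep : ℝ => 2 * (L : ℝ) * ((1 / 4) *
      (|a| + |c| + Real.sqrt ((|a| - |c|) ^ 2 + 4 * (|e1| + ep) * (|e2| + ep))) ^ 2) ^ t) := by
    have h1 : Continuous (fun ep : ℝ => (|a| - |c|) ^ 2 + 4 * (|e1| + ep) * (|e2| + ep)) := by
      continuity
    have h2 : Continuous (fun ep : ℝ =>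
        Real.sqrt ((|a| - |c|) ^ 2 + 4 * (|e1| + ep) * (|e2| + ep))) :=
      Real.continuous_sqrt.comp h1
    continuity
  have hval : (2 * (L : ℝ) * ((1 / 4) *
      (|a| + |c| + Real.sqrt ((|a| - |c|) ^ 2 + 4 * (|e1| + 0) * (|e2| + 0))) ^ 2) ^ t)
      = 2 * L * ((1 / 4) * (|a| + |c| + Real.sqrt ((|a| - |c|) ^ 2 + 4 * |e1| * |e2|)) ^ 2) ^ t := by
    norm_num
  have htend : Filter.Tendsto (fun ep : ℝ => 2 * (L : ℝ) * ((1 / 4) *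
      (|a| + |c| + Real.sqrt ((|a| - |c|) ^ 2 + 4 * (|e1| + ep) * (|e2| + ep))) ^ 2) ^ t)
      (nhdsWithin 0 (Set.Ioi 0))
      (nhds (2 * L *
        ((1 / 4) * (|a| + |c| + Real.sqrt ((|a| - |c|) ^ 2 + 4 * |e1| * |e2|)) ^ 2) ^ t)) := by
    have := (hc.tendsto 0).mono_left (nhdsWithin_le_nhds (s := Set.Ioi (0:ℝ)))
    rw [hval] at this
    exact this
  exact ge_of_tendsto htend
    (Filter.eventually_of_mem self_mem_nhdsWithin (fun ep hep => hbound ep hep))
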